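/- For ν ∈ ℤ_{≥0} and 0 ≤ k ≤ 2ν, the rational function [2ν choose k]_q · (q^ν + q^{−ν})/(q^{ν−k} + q^{−(ν−k)}) ∈ ℂ(q) has degree (as defined by the leading power of q) equal to (2ν−k)k + ν − |ν−k|, and its leading coefficient is 1/2 if k = ν > 0 and 1 otherwise. -/

import Mathlib

set_option maxHeartbeats 1000000
set_option synthInstance.maxHeartbeats 1000000

noncomputable section

/-- `K = ℂ(q)`. -/
abbrev Kq : Type := RatFunc ℂ

/-- The variable `q`. -/
def qq : Kq := RatFunc.X

/-- The quantum integer `[n] = (qⁿ − q⁻ⁿ)/(q − q⁻¹)`. -/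
noncomputable def qint (n : ℤ) : Kq := (qq ^ n - qq ^ (-n)) / (qq - qq⁻¹)

/-- The quantum factorial `[k]!`. -/
noncomputable def qfac (k : ℕ) : Kq := ∏ i ∈ Finset.range k, qint (i + 1)

/-- The balanced Gaussian binomial coefficient `[m choose k] = [m]!/([m−k]![k]!)`. -/
noncomputable def qbinom (m k : ℕ) : Kq := qfac m / (qfac (m - k) * qfac k)

/-- `{a} = q^a + q^{−a}`. -/
noncomputable def qbrace (a : ℤ) : Kq := qq ^ a + qq ^ (-a)

/-- The leading coefficient of a rational function. -/
noncomputable def lcoef (c : Kq) : ℂ := c.num.leadingCoeff / c.denom.leadingCoeff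

open Polynomial

/-- spec: nonzero, degree, leading coefficient -/
def Spec (x : Kq) (d : ℤ) (c : ℂ) : Prop := x ≠ 0 ∧ x.intDegree = d ∧ lcoef x = c

lemma lcoef_eq (x : Kq) : lcoef x = x.num.leadingCoeff := by
  rw [lcoef, (RatFunc.monic_denom x).leadingCoeff, div_one]

lemma spec_poly_div (p r : ℂ[X]) (hp : p ≠ 0) (hr : r ≠ 0) :
    Spec (algebraMap ℂ[X] Kq p / algebraMap ℂ[X] Kq r)
      ((p.natDegree : ℤ) - r.natDegree) (p.leadingCoeff / r.leadingCoeff) := by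
  set x : Kq := algebraMap ℂ[X] Kq p / algebraMap ℂ[X] Kq r with hxdef
  have hpm : algebraMap ℂ[X] Kq p ≠ 0 := RatFunc.algebraMap_ne_zero hp
  have hrm : algebraMap ℂ[X] Kq r ≠ 0 := RatFunc.algebraMap_ne_zero hr
  have hx : x ≠ 0 := div_ne_zero hpm hrm
  have hnum : x.num ≠ 0 := RatFunc.num_ne_zero hx
  have hden : x.denom ≠ 0 := x.denom_ne_zero
  have hcross : x.num * r = x.denom * p := by
    apply RatFunc.algebraMap_injective ℂ
    rw [map_mul, map_mul]
    have h1 : algebraMap ℂ[X] Kq x.num / algebraMap ℂ[X] Kq x.denom = x :=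
      RatFunc.num_div_denom x
    rw [hxdef, div_eq_div_iff (RatFunc.algebraMap_ne_zero hden) hrm] at h1
    linear_combination h1
  constructor
  · exact hx
  constructor
  · have hdeg := congrArg Polynomial.natDegree hcross
    rw [Polynomial.natDegree_mul hnum hr, Polynomial.natDegree_mul hden hp] at hdeg
    rw [RatFunc.intDegree]
    omega
  · have hlc := congrArg Polynomial.leadingCoeff hcross
    rw [Polynomial.leadingCoeff_mul, Polynomial.leadingCoeff_mul,
      (RatFunc.monic_denom x).leadingCoeff, one_mul] at hlc
    rw [lcoef_eq]
    have hrlc : r.leadingCoeff ≠ 0 := Polynomial.leadingCoeff_ne_zero.mpr hr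
    field_simp
    linear_combination hlc

lemma lcoef_ne_zero {x : Kq} (hx : x ≠ 0) : lcoef x ≠ 0 := by
  rw [lcoef_eq]
  exact Polynomial.leadingCoeff_ne_zero.mpr (RatFunc.num_ne_zero hx)

lemma lcoef_mul {x y : Kq} (hx : x ≠ 0) (hy : y ≠ 0) :
    lcoef (x * y) = lcoef x * lcoef y := by
  have h : x * y = algebraMap ℂ[X] Kq (x.num * y.num) / algebraMap ℂ[X] Kq (x.denom * y.denom) := by
    conv_lhs => rw [← RatFunc.num_div_denom x, ← RatFunc.num_div_denom y]
    rw [map_mul, map_mul, div_mul_div_comm]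
  rw [h, (spec_poly_div _ _ (mul_ne_zero (RatFunc.num_ne_zero hx) (RatFunc.num_ne_zero hy))
    (mul_ne_zero x.denom_ne_zero y.denom_ne_zero)).2.2]
  rw [Polynomial.leadingCoeff_mul, Polynomial.leadingCoeff_mul,
    (RatFunc.monic_denom x).leadingCoeff, (RatFunc.monic_denom y).leadingCoeff,
    lcoef_eq, lcoef_eq]
  norm_num

lemma spec_mul {x y : Kq} {d e : ℤ} {c b : ℂ} (hx : Spec x d c) (hy : Spec y e b) :
    Spec (x * y) (d + e) (c * b) := by
  obtain ⟨hx0, hxd, hxc⟩ := hx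
  obtain ⟨hy0, hyd, hyc⟩ := hy
  exact ⟨mul_ne_zero hx0 hy0, by rw [RatFunc.intDegree_mul hx0 hy0, hxd, hyd],
    by rw [lcoef_mul hx0 hy0, hxc, hyc]⟩

lemma lcoef_one : lcoef 1 = 1 := by
  rw [lcoef_eq, RatFunc.num_one, Polynomial.leadingCoeff_one]

lemma spec_inv {x : Kq} {d : ℤ} {c : ℂ} (hx : Spec x d c) : Spec x⁻¹ (-d) c⁻¹ := by
  obtain ⟨hx0, hxd, hxc⟩ := hx
  have hi : x⁻¹ ≠ 0 := inv_ne_zero hx0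
  have h1 : x * x⁻¹ = 1 := mul_inv_cancel₀ hx0
  refine ⟨hi, ?_, ?_⟩
  · have := RatFunc.intDegree_mul hx0 hi
    rw [h1, RatFunc.intDegree_one] at this
    omega
  · have := lcoef_mul hx0 hi
    rw [h1, lcoef_one] at this
    rw [← hxc]
    exact eq_inv_of_mul_eq_one_right this.symm

lemma spec_div {x y : Kq} {d e : ℤ} {c b : ℂ} (hx : Spec x d c) (hy : Spec y e b) :
    Spec (x / y) (d - e) (c / b) := by
  rw [div_eq_mul_inv, div_eq_mul_inv, sub_eq_add_neg]
  exact spec_mul hx (spec_inv hy)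

lemma qq_eq : algebraMap ℂ[X] Kq X = qq := RatFunc.algebraMap_X

lemma qq_ne_zero : (qq : Kq) ≠ 0 := RatFunc.X_ne_zero

lemma qsq_ne : (qq ^ 2 - 1 : Kq) ≠ 0 := by
  have hne : (X ^ 2 - 1 : ℂ[X]) ≠ 0 := by
    have h : (X ^ 2 - 1 : ℂ[X]) = X ^ 2 - C 1 := by simp
    rw [h]
    exact (monic_X_pow_sub_C (1 : ℂ) two_ne_zero).ne_zero
  have := RatFunc.algebraMap_ne_zero (K := ℂ) hne
  simpa [map_sub, map_pow, map_one, qq_eq, qq] using this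

lemma qden_ne : (qq - qq⁻¹ : Kq) ≠ 0 := by
  have heq : qq - qq⁻¹ = (qq ^ 2 - 1) / qq := by
    field_simp [qq_ne_zero]
  rw [heq]
  exact div_ne_zero qsq_ne qq_ne_zero

lemma qint_eq (n : ℕ) : qint ((n : ℤ) + 1) =
    algebraMap ℂ[X] Kq (X * (X ^ (2 * (n + 1)) - 1)) /
      algebraMap ℂ[X] Kq (X ^ (n + 1) * (X ^ 2 - 1)) := by
  have e1 : ((n : ℤ) + 1) = ((n + 1 : ℕ) : ℤ) := by push_cast; ring
  rw [qint, e1, zpow_neg, zpow_natCast]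
  rw [map_mul, map_sub, map_pow, map_one, map_mul, map_pow, map_sub, map_pow, map_one, qq_eq]
  rw [div_eq_div_iff qden_ne (mul_ne_zero (pow_ne_zero _ qq_ne_zero) qsq_ne)]
  have hp : (qq : Kq) ^ (n + 1) ≠ 0 := pow_ne_zero _ qq_ne_zero
  field_simp [qq_ne_zero]
  ring

lemma spec_qint (n : ℕ) : Spec (qint ((n : ℤ) + 1)) n 1 := by
  rw [qint_eq]
  have h1 : (X * (X ^ (2 * (n + 1)) - 1) : ℂ[X]).Monic := by
    have : (X ^ (2 * (n + 1)) - 1 : ℂ[X]) = X ^ (2 * (n + 1)) - C 1 := by simp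
    rw [this]
    exact monic_X.mul (monic_X_pow_sub_C (1 : ℂ) (by omega))
  have h2 : (X ^ (n + 1) * (X ^ 2 - 1) : ℂ[X]).Monic := by
    have : (X ^ 2 - 1 : ℂ[X]) = X ^ 2 - C 1 := by simp
    rw [this]
    exact (monic_X_pow _).mul (monic_X_pow_sub_C (1 : ℂ) two_ne_zero)
  have := spec_poly_div _ _ h1.ne_zero h2.ne_zero
  have d1 : (X * (X ^ (2 * (n + 1)) - 1) : ℂ[X]).natDegree = 2 * n + 3 := by
    rw [Polynomial.natDegree_mul X_ne_zero (by
      have : (X ^ (2 * (n + 1)) - 1 : ℂ[X]) = X ^ (2 * (n + 1)) - C 1 := by simp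
      rw [this]; exact (monic_X_pow_sub_C (1 : ℂ) (by omega)).ne_zero)]
    have : (X ^ (2 * (n + 1)) - 1 : ℂ[X]) = X ^ (2 * (n + 1)) - C 1 := by simp
    rw [this, natDegree_X, natDegree_X_pow_sub_C]
    omega
  have d2 : (X ^ (n + 1) * (X ^ 2 - 1) : ℂ[X]).natDegree = n + 3 := by
    rw [Polynomial.natDegree_mul (pow_ne_zero _ X_ne_zero) (by
      have : (X ^ 2 - 1 : ℂ[X]) = X ^ 2 - C 1 := by simp
      rw [this]; exact (monic_X_pow_sub_C (1 : ℂ) two_ne_zero).ne_zero)]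
    have : (X ^ 2 - 1 : ℂ[X]) = X ^ 2 - C 1 := by simp
    rw [this, natDegree_X_pow, natDegree_X_pow_sub_C]
  rw [d1, d2, h1.leadingCoeff, h2.leadingCoeff] at this
  have e : ((2 * n + 3 : ℕ) : ℤ) - ((n + 3 : ℕ) : ℤ) = n := by push_cast; ring
  rw [e, div_one] at this
  exact this

lemma spec_qfac (k : ℕ) : Spec (qfac k) (∑ i ∈ Finset.range k, (i : ℤ)) 1 := by
  induction k with
  | zero => exact ⟨one_ne_zero, by simp [qfac, RatFunc.intDegree_one], by simp [qfac, lcoef_one]⟩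
  | succ n ih =>
    have h : qfac (n + 1) = qfac n * qint ((n : ℤ) + 1) := by
      rw [qfac, qfac, Finset.prod_range_succ]
    rw [h, Finset.sum_range_succ]
    have := spec_mul ih (spec_qint n)
    simpa using this

lemma qbrace_eq (a : ℤ) : qbrace a =
    algebraMap ℂ[X] Kq (X ^ (2 * a.natAbs) + 1) / algebraMap ℂ[X] Kq (X ^ a.natAbs) := by
  have key : qbrace a = qq ^ a.natAbs + (qq ^ a.natAbs)⁻¹ := by
    obtain ⟨n, rfl | rfl⟩ := Int.eq_nat_or_neg a
    · rw [qbrace, Int.natAbs_natCast, zpow_neg, zpow_natCast]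
    · rw [qbrace, Int.natAbs_neg, Int.natAbs_natCast, neg_neg, zpow_neg, zpow_natCast, add_comm]
  rw [key, map_add, map_pow, map_one, map_pow, qq_eq]
  have hp : (qq : Kq) ^ a.natAbs ≠ 0 := pow_ne_zero _ qq_ne_zero
  field_simp
  ring

lemma spec_qbrace (a : ℤ) : Spec (qbrace a) |a| (if a = 0 then 2 else 1) := by
  rw [qbrace_eq]
  rcases eq_or_ne a 0 with h | h
  · subst h
    simp only [Int.natAbs_zero, mul_zero, pow_zero]
    have : ((1 : ℂ[X]) + 1) = C 2 := by
      rw [show (2 : ℂ) = 1 + 1 from by norm_num, C_add, C_1]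
    have hs := spec_poly_div (C 2) 1 (by
      intro hc
      simp only [C_eq_zero] at hc
      norm_num at hc) one_ne_zero
    rw [natDegree_C, natDegree_one, leadingCoeff_C, leadingCoeff_one, div_one] at hs
    simpa [this] using hs
  · have hn : a.natAbs ≠ 0 := Int.natAbs_ne_zero.mpr h
    have hm : (X ^ (2 * a.natAbs) + 1 : ℂ[X]) = X ^ (2 * a.natAbs) + C 1 := by simp
    have hmon : (X ^ (2 * a.natAbs) + 1 : ℂ[X]).Monic := by
      rw [hm]; exact monic_X_pow_add_C (a := (1:ℂ)) (Nat.mul_ne_zero (by norm_num) hn)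
    have hs := spec_poly_div _ _ hmon.ne_zero (pow_ne_zero a.natAbs (X_ne_zero (R := ℂ)))
    rw [hmon.leadingCoeff, (monic_X_pow (R := ℂ) a.natAbs).leadingCoeff] at hs
    have hd : (X ^ (2 * a.natAbs) + 1 : ℂ[X]).natDegree = 2 * a.natAbs := by
      rw [hm, natDegree_X_pow_add_C]
    rw [hd, natDegree_X_pow, div_one] at hs
    have : ((2 * a.natAbs : ℕ) : ℤ) - (a.natAbs : ℤ) = |a| := by
      rw [Int.abs_eq_natAbs]; push_cast; ring
    rw [this] at hs
    simpa [h] using hs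

lemma sum_range_add (a b : ℕ) :
    (∑ i ∈ Finset.range (a + b), (i : ℤ)) =
      (∑ i ∈ Finset.range a, (i : ℤ)) + (∑ i ∈ Finset.range b, (i : ℤ)) + a * b := by
  induction b with
  | zero => simp
  | succ m ih =>
    rw [show a + (m + 1) = (a + m) + 1 from by omega, Finset.sum_range_succ,
      Finset.sum_range_succ, ih]
    push_cast
    ring

/-- For `0 ≤ k ≤ 2ν`, the rational function `[2ν choose k]·{ν}/{ν−k}` has degree
`(2ν−k)k + ν − |ν−k|` and leading coefficient `1/2` if `k = ν > 0` and `1` otherwise. -/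
theorem statement11 (ν k : ℕ) (hk : k ≤ 2 * ν) :
    (qbinom (2 * ν) k * qbrace ν / qbrace ((ν : ℤ) - k)).intDegree =
      ((2 * ν : ℤ) - k) * k + ν - |(ν : ℤ) - k| ∧
    lcoef (qbinom (2 * ν) k * qbrace ν / qbrace ((ν : ℤ) - k)) =
      (if k = ν ∧ 0 < ν then (1 / 2 : ℂ) else 1) := by
  have hbin : Spec (qbinom (2 * ν) k)
      ((∑ i ∈ Finset.range (2 * ν), (i : ℤ)) -
        ((∑ i ∈ Finset.range (2 * ν - k), (i : ℤ)) + ∑ i ∈ Finset.range k, (i : ℤ)))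
      (1 / (1 * 1)) := by
    rw [qbinom]
    exact spec_div (spec_qfac _) (spec_mul (spec_qfac _) (spec_qfac _))
  have hbdeg : (∑ i ∈ Finset.range (2 * ν), (i : ℤ)) -
      ((∑ i ∈ Finset.range (2 * ν - k), (i : ℤ)) + ∑ i ∈ Finset.range k, (i : ℤ)) =
      ((2 * ν : ℤ) - k) * k := by
    have h2 : (2 * ν - k) + k = 2 * ν := by omega
    have h3 := sum_range_add (2 * ν - k) k
    rw [h2] at h3
    rw [h3, Nat.cast_sub hk]
    push_cast
    ring
  have hb1 : Spec (qbrace (ν : ℤ)) |(ν : ℤ)| (if (ν : ℤ) = 0 then 2 else 1) := spec_qbrace _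
  have hb2 : Spec (qbrace ((ν : ℤ) - k)) |(ν : ℤ) - k| (if (ν : ℤ) - k = 0 then 2 else 1) :=
    spec_qbrace _
  obtain ⟨_, hdeg, hlc⟩ := spec_div (spec_mul hbin hb1) hb2
  constructor
  · rw [hdeg, hbdeg, abs_of_nonneg (show (0:ℤ) ≤ (ν:ℤ) by positivity)]
  · rw [hlc]
    rcases Nat.eq_zero_or_pos ν with hν | hν
    · have hk0 : k = 0 := by omega
      subst hν; subst hk0
      norm_num
    · have hν0 : (ν : ℤ) ≠ 0 := Int.natCast_ne_zero.mpr hν.ne'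
      rcases eq_or_ne k ν with hkν | hkν
      · subst hkν
        simp [hν0, hν, hν.ne']
      · have hne : (ν : ℤ) - k ≠ 0 := by
          intro hc
          exact hkν (by omega : k = ν)
        simp [hν0, hne, hkν, hν.ne']

end
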